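/- All rules of G3cp are height-preserving invertible. In particular: if Γ ⊢ A→B, Δ is derivable with height at most n then Γ, A ⊢ B, Δ is derivable with height at most n; and if Γ, A→B ⊢ Δ is derivable with height at most n, then both Γ ⊢ A, Δ and Γ, B ⊢ Δ are derivable with height at most n. -/
import Mathlib


inductive Formula where
  | atom : ℕ → Formula
  | top : Formula
  | bot : Formula
  | and : Formula → Formula → Formula
  | or : Formula → Formula → Formula
  | imp : Formula → Formula → Formula

open Formula

/-- `Der n Γ Δ` : the sequent `Γ ⊢ Δ` is derivable in the classical
multi-conclusion system G3cp with height at most `n`. -/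
inductive Der : ℕ → Multiset Formula → Multiset Formula → Prop where
  | ax (n : ℕ) (Γ Δ : Multiset Formula) (p : ℕ) :
      Der (n + 1) (atom p ::ₘ Γ) (atom p ::ₘ Δ)
  | topR (n : ℕ) (Γ Δ : Multiset Formula) : Der (n + 1) Γ (top ::ₘ Δ)
  | topL {n Γ Δ} : Der n Γ Δ → Der (n + 1) (top ::ₘ Γ) Δ
  | botL (n : ℕ) (Γ Δ : Multiset Formula) : Der (n + 1) (bot ::ₘ Γ) Δ
  | andL {n Γ Δ A B} : Der n (A ::ₘ B ::ₘ Γ) Δ →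
      Der (n + 1) (and A B ::ₘ Γ) Δ
  | andR {n Γ Δ A B} : Der n Γ (A ::ₘ Δ) → Der n Γ (B ::ₘ Δ) →
      Der (n + 1) Γ (and A B ::ₘ Δ)
  | orL {n Γ Δ A B} : Der n (A ::ₘ Γ) Δ → Der n (B ::ₘ Γ) Δ →
      Der (n + 1) (or A B ::ₘ Γ) Δ
  | orR {n Γ Δ A B} : Der n Γ (A ::ₘ B ::ₘ Δ) →
      Der (n + 1) Γ (or A B ::ₘ Δ)
  | impL {n Γ Δ A B} : Der n Γ (A ::ₘ Δ) → Der n (B ::ₘ Γ) Δ →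
      Der (n + 1) (imp A B ::ₘ Γ) Δ
  | impR {n Γ Δ A B} : Der n (A ::ₘ Γ) (B ::ₘ Δ) →
      Der (n + 1) Γ (imp A B ::ₘ Δ)

theorem derSucc : ∀ {n Γ Δ}, Der n Γ Δ → Der (n+1) Γ Δ := by
  intro n Γ Δ h
  induction h with
  | ax n Γ Δ p => exact Der.ax _ _ _ _
  | topR n Γ Δ => exact Der.topR _ _ _
  | topL _ ih => exact Der.topL ih
  | botL n Γ Δ => exact Der.botL _ _ _
  | andL _ ih => exact Der.andL ih
  | andR _ _ ih1 ih2 => exact Der.andR ih1 ih2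
  | orL _ _ ih1 ih2 => exact Der.orL ih1 ih2
  | orR _ ih => exact Der.orR ih
  | impL _ _ ih1 ih2 => exact Der.impL ih1 ih2
  | impR _ ih => exact Der.impR ih

theorem impR_inv {n Γ S} (h : Der n Γ S) :
    ∀ Δ A B, S = imp A B ::ₘ Δ → Der n (A ::ₘ Γ) (B ::ₘ Δ) := by
  induction h with
  | ax m Γ' Δ' p =>
    intro Δ A B e
    rcases Multiset.cons_eq_cons.mp e.symm with ⟨h1, _⟩ | ⟨_, cs, h1, h2⟩
    · simp at h1
    · subst h2; subst h1
      rw [Multiset.cons_swap A (atom p) Γ', Multiset.cons_swap B (atom p) cs]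
      exact Der.ax _ _ _ _
  | topR m Γ' Δ' =>
    intro Δ A B e
    rcases Multiset.cons_eq_cons.mp e.symm with ⟨h1, _⟩ | ⟨_, cs, h1, h2⟩
    · simp at h1
    · subst h2; subst h1
      rw [Multiset.cons_swap B top cs]
      exact Der.topR _ _ _
  | @topL m Γ' S' h ih =>
    intro Δ A B e
    rw [Multiset.cons_swap A top Γ']
    exact Der.topL (ih Δ A B e)
  | botL m Γ' Δ' =>
    intro Δ A B e
    rw [Multiset.cons_swap A bot Γ']
    exact Der.botL _ _ _
  | @andL m Γ' S' C D h ih =>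
    intro Δ A B e
    have t := ih Δ A B e
    rw [Multiset.cons_swap A C, Multiset.cons_swap A D] at t
    rw [Multiset.cons_swap A (and C D) Γ']
    exact Der.andL t
  | @andR m Γ' Δ' C D h1 h2 ih1 ih2 =>
    intro Δ A B e
    rcases Multiset.cons_eq_cons.mp e.symm with ⟨h1', _⟩ | ⟨_, cs, hcs, h2'⟩
    · simp at h1'
    · subst hcs; subst h2'
      have t1 := ih1 (C ::ₘ cs) A B (Multiset.cons_swap _ _ _)
      have t2 := ih2 (D ::ₘ cs) A B (Multiset.cons_swap _ _ _)
      rw [Multiset.cons_swap B C] at t1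
      rw [Multiset.cons_swap B D] at t2
      rw [Multiset.cons_swap B (and C D) cs]
      exact Der.andR t1 t2
  | @orL m Γ' S' C D h1 h2 ih1 ih2 =>
    intro Δ A B e
    have t1 := ih1 Δ A B e
    have t2 := ih2 Δ A B e
    rw [Multiset.cons_swap A C] at t1
    rw [Multiset.cons_swap A D] at t2
    rw [Multiset.cons_swap A (or C D) Γ']
    exact Der.orL t1 t2
  | @orR m Γ' Δ' C D h ih =>
    intro Δ A B e
    rcases Multiset.cons_eq_cons.mp e.symm with ⟨h1, _⟩ | ⟨_, cs, hcs, h2⟩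
    · simp at h1
    · subst h2
      subst hcs
      have t := ih (C ::ₘ D ::ₘ cs) A B (by
        rw [Multiset.cons_swap D (imp A B), Multiset.cons_swap C (imp A B)])
      rw [Multiset.cons_swap B C, Multiset.cons_swap B D] at t
      rw [Multiset.cons_swap B (or C D) cs]
      exact Der.orR t
  | @impL m Γ' S' C D h1 h2 ih1 ih2 =>
    intro Δ A B e
    subst e
    have t1 := ih1 (C ::ₘ Δ) A B (Multiset.cons_swap _ _ _)
    have t2 := ih2 Δ A B rfl
    rw [Multiset.cons_swap B C] at t1
    rw [Multiset.cons_swap A D] at t2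
    rw [Multiset.cons_swap A (imp C D) Γ']
    exact Der.impL t1 t2
  | @impR m Γ' Δ' C D h ih =>
    intro Δ A B e
    rcases Multiset.cons_eq_cons.mp e.symm with ⟨h1, h2⟩ | ⟨_, cs, hcs, h2⟩
    · injection h1 with hC hD
      subst hC; subst hD; subst h2
      exact derSucc h
    · subst h2
      subst hcs
      have t := ih (D ::ₘ cs) A B (Multiset.cons_swap _ _ _)
      rw [Multiset.cons_swap A C] at t
      rw [Multiset.cons_swap B D] at t
      rw [Multiset.cons_swap B (imp C D) cs]
      exact Der.impR t

theorem impL_inv {n S Δ} (h : Der n S Δ) :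
    ∀ Γ A B, S = imp A B ::ₘ Γ → Der n Γ (A ::ₘ Δ) ∧ Der n (B ::ₘ Γ) Δ := by
  induction h with
  | ax m Γ' Δ' p =>
    intro Γ A B e
    rcases Multiset.cons_eq_cons.mp e.symm with ⟨h1, _⟩ | ⟨_, cs, h1, h2⟩
    · simp at h1
    · subst h2; subst h1
      constructor
      · rw [Multiset.cons_swap A (atom p) Δ']; exact Der.ax _ _ _ _
      · rw [Multiset.cons_swap B (atom p) cs]; exact Der.ax _ _ _ _
  | topR m Γ' Δ' =>
    intro Γ A B e
    subst e
    constructor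
    · rw [Multiset.cons_swap A top Δ']; exact Der.topR _ _ _
    · exact Der.topR _ _ _
  | @topL m Γind Δ' h ih =>
    intro Γ A B e
    rcases Multiset.cons_eq_cons.mp e.symm with ⟨h1, _⟩ | ⟨_, cs, h1, h2⟩
    · simp at h1
    · subst h2; subst h1
      obtain ⟨t1, t2⟩ := ih cs A B rfl
      constructor
      · exact Der.topL t1
      · rw [Multiset.cons_swap B top cs]; exact Der.topL t2
  | botL m Γ' Δ' =>
    intro Γ A B e
    rcases Multiset.cons_eq_cons.mp e.symm with ⟨h1, _⟩ | ⟨_, cs, h1, h2⟩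
    · simp at h1
    · subst h1
      constructor
      · exact Der.botL _ _ _
      · rw [Multiset.cons_swap B bot cs]; exact Der.botL _ _ _
  | @andL m Γind Δ' C D h ih =>
    intro Γ A B e
    rcases Multiset.cons_eq_cons.mp e.symm with ⟨h1, _⟩ | ⟨_, cs, h1, h2⟩
    · simp at h1
    · subst h2; subst h1
      obtain ⟨t1, t2⟩ := ih (C ::ₘ D ::ₘ cs) A B (by
        rw [Multiset.cons_swap D (imp A B), Multiset.cons_swap C (imp A B)])
      constructor
      · exact Der.andL t1
      · rw [Multiset.cons_swap B (and C D) cs]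
        rw [Multiset.cons_swap B C, Multiset.cons_swap B D] at t2
        exact Der.andL t2
  | @andR m Γind Δ' C D h1 h2 ih1 ih2 =>
    intro Γ A B e
    subst e
    obtain ⟨a1, b1⟩ := ih1 Γ A B rfl
    obtain ⟨a2, b2⟩ := ih2 Γ A B rfl
    constructor
    · rw [Multiset.cons_swap A (and C D) Δ']
      rw [Multiset.cons_swap A C] at a1
      rw [Multiset.cons_swap A D] at a2
      exact Der.andR a1 a2
    · exact Der.andR b1 b2
  | @orL m Γind Δ' C D h1 h2 ih1 ih2 =>
    intro Γ A B e
    rcases Multiset.cons_eq_cons.mp e.symm with ⟨h1', _⟩ | ⟨_, cs, h1', h2'⟩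
    · simp at h1'
    · subst h2'; subst h1'
      obtain ⟨a1, b1⟩ := ih1 (C ::ₘ cs) A B (Multiset.cons_swap _ _ _)
      obtain ⟨a2, b2⟩ := ih2 (D ::ₘ cs) A B (Multiset.cons_swap _ _ _)
      constructor
      · exact Der.orL a1 a2
      · rw [Multiset.cons_swap B (or C D) cs]
        rw [Multiset.cons_swap B C] at b1
        rw [Multiset.cons_swap B D] at b2
        exact Der.orL b1 b2
  | @orR m Γind Δ' C D h ih =>
    intro Γ A B e
    subst e
    obtain ⟨t1, t2⟩ := ih Γ A B rfl
    constructor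
    · rw [Multiset.cons_swap A (or C D) Δ']
      rw [Multiset.cons_swap A C, Multiset.cons_swap A D] at t1
      exact Der.orR t1
    · exact Der.orR t2
  | @impL m Γind Δ' C D h1 h2 ih1 ih2 =>
    intro Γ A B e
    rcases Multiset.cons_eq_cons.mp e.symm with ⟨h1', h2'⟩ | ⟨_, cs, h1', h2'⟩
    · injection h1' with hC hD
      subst hC; subst hD; subst h2'
      exact ⟨derSucc h1, derSucc h2⟩
    · subst h2'; subst h1'
      obtain ⟨a1, b1⟩ := ih1 cs A B rfl
      obtain ⟨a2, b2⟩ := ih2 (D ::ₘ cs) A B (Multiset.cons_swap _ _ _)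
      constructor
      · rw [Multiset.cons_swap A C] at a1
        exact Der.impL a1 a2
      · rw [Multiset.cons_swap B (imp C D) cs]
        rw [Multiset.cons_swap B D] at b2
        exact Der.impL b1 b2
  | @impR m Γind Δ' C D h ih =>
    intro Γ A B e
    subst e
    obtain ⟨t1, t2⟩ := ih (C ::ₘ Γ) A B (Multiset.cons_swap _ _ _)
    constructor
    · rw [Multiset.cons_swap A (imp C D) Δ']
      rw [Multiset.cons_swap A D] at t1
      exact Der.impR t1
    · rw [Multiset.cons_swap B C] at t2
      exact Der.impR t2

/-- →R and →L are height-preserving invertible in G3cp. -/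
theorem g3cp_imp_invertible (n : ℕ) (Γ Δ : Multiset Formula) (A B : Formula) :
    (Der n Γ (Formula.imp A B ::ₘ Δ) → Der n (A ::ₘ Γ) (B ::ₘ Δ)) ∧
    (Der n (Formula.imp A B ::ₘ Γ) Δ →
      Der n Γ (A ::ₘ Δ) ∧ Der n (B ::ₘ Γ) Δ) :=
  ⟨fun h => impR_inv h Δ A B rfl, fun h => impL_inv h Γ A B rfl⟩
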